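/- Theorem 1 (equivalence of the robust and dualized optimization problems): let I be a finite set, α ∈ [0,1], μ̂ : I → ℝ, σ̂ : I × I → ℝ, δ^μ : I → ℝ and δ^σ : I × I → ℝ nonnegative, Γ^μ, Γ^σ natural numbers, and N a natural number with N ≤ |I|. Then the minimum over x : I → {0,1} with Σ_{i∈I} x_i = N of the worst-case objective α(Σ_{i,j} σ̂_{ij} x_i x_j + max_{|S^σ| ≤ Γ^σ} Σ_{(i,j)∈S^σ} δ^σ_{ij} x_i x_j) − (1−α)(Σ_i μ̂_i x_i − max_{|S^μ| ≤ Γ^μ} Σ_{i∈S^μ} δ^μ_i x_i) equals the minimum over all (x, p, q, y, z) with x : I → {0,1}, Σ_{i∈I} x_i = N, y ≥ 0, z ≥ 0, p_i ≥ 0 and δ^μ_i x_i ≤ y + p_i for all i ∈ I, q_{ij} ≥ 0 and δ^σ_{ij} x_i x_j ≤ z + q_{ij} for all (i,j) ∈ I × I, of α(Σ_{i,j} σ̂_{ij} x_i x_j + z·Γ^σ + Σ_{i,j} q_{ij}) − (1−α)(Σ_i μ̂_i x_i − y·Γ^μ − Σ_i p_i). Moreover, x attains the first minimum if and only if there exist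 (p, q, y, z) such that (x, p, q, y, z) attains the second minimum. -/

import Mathlib

lemma exists_topset {J : Type*} [Fintype J] [DecidableEq J] (a : J → ℝ) :
    ∀ Γ : ℕ, Γ ≤ Fintype.card J →
      ∃ T : Finset J, T.card = Γ ∧ ∀ i ∉ T, ∀ j ∈ T, a i ≤ a j := by
  intro Γ
  induction Γ with
  | zero => exact fun _ => ⟨∅, rfl, by simp⟩
  | succ n ih =>
    intro h
    obtain ⟨T, hcard, hT⟩ := ih (by omega)
    have hne : (Tᶜ : Finset J).Nonempty := by
      rw [← Finset.card_pos, Finset.card_compl, hcard]; omega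
    obtain ⟨i0, hi0, hmax⟩ := Finset.exists_max_image Tᶜ a hne
    have hi0T : i0 ∉ T := Finset.mem_compl.1 hi0
    refine ⟨insert i0 T, ?_, ?_⟩
    · rw [Finset.card_insert_of_notMem hi0T, hcard]
    · intro i hi j hj
      have hiT : i ∉ T := fun h' => hi (Finset.mem_insert_of_mem h')
      rcases Finset.mem_insert.1 hj with rfl | hj
      · exact hmax i (Finset.mem_compl.2 hiT)
      · exact hT i hiT j hj

lemma dual_weak {J : Type*} [Fintype J] (a : J → ℝ) (Γ : ℕ) (g : ℝ)
    (hg : ∃ S : Finset J, S.card ≤ Γ ∧ g = ∑ i ∈ S, a i)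
    (y : ℝ) (p : J → ℝ) (hy : 0 ≤ y) (hp : ∀ i, 0 ≤ p i) (h : ∀ i, a i ≤ y + p i) :
    g ≤ y * Γ + ∑ i, p i := by
  obtain ⟨S, hS, rfl⟩ := hg
  have h1 : ∑ i ∈ S, a i ≤ ∑ i ∈ S, (y + p i) := Finset.sum_le_sum (fun i _ => h i)
  have h2 : ∑ i ∈ S, (y + p i) = S.card * y + ∑ i ∈ S, p i := by
    rw [Finset.sum_add_distrib, Finset.sum_const, nsmul_eq_mul]
  have h3 : (S.card : ℝ) * y ≤ y * Γ := by
    rw [mul_comm]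
    exact mul_le_mul_of_nonneg_left (by exact_mod_cast hS) hy
  have h4 : ∑ i ∈ S, p i ≤ ∑ i, p i :=
    Finset.sum_le_sum_of_subset_of_nonneg (Finset.subset_univ S) (fun i _ _ => hp i)
  linarith

lemma dual_exact {J : Type*} [Fintype J] (a : J → ℝ) (ha : ∀ i, 0 ≤ a i) (Γ : ℕ) (g : ℝ)
    (hg : IsGreatest {w : ℝ | ∃ S : Finset J, S.card ≤ Γ ∧ w = ∑ i ∈ S, a i} g) :
    ∃ (y : ℝ) (p : J → ℝ), 0 ≤ y ∧ (∀ i, 0 ≤ p i) ∧ (∀ i, a i ≤ y + p i) ∧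
      y * Γ + ∑ i, p i = g := by
  classical
  by_cases hΓ : Fintype.card J ≤ Γ
  · refine ⟨0, a, le_refl _, ha, fun i => by simp, ?_⟩
    have h1 : (∑ i, a i) ≤ g := hg.2 ⟨Finset.univ, by simpa using hΓ, rfl⟩
    obtain ⟨S, hS, hgeq⟩ := hg.1
    have h2 : g ≤ ∑ i, a i := by
      rw [hgeq]
      exact Finset.sum_le_sum_of_subset_of_nonneg (Finset.subset_univ S) (fun i _ _ => ha i)
    linarith
  · push_neg at hΓ
    rcases Nat.eq_zero_or_pos Γ with rfl | hΓpos
    · have hJ : Nonempty J := by rw [← Fintype.card_pos_iff]; omega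
      have hne : (Finset.univ : Finset J).Nonempty := Finset.univ_nonempty
      obtain ⟨S, hS, hgeq⟩ := hg.1
      have hS0 : S = ∅ := Finset.card_eq_zero.1 (Nat.le_zero.1 hS)
      refine ⟨Finset.univ.sup' hne a, 0, ?_, fun i => le_refl 0,
        fun i => le_add_of_le_of_nonneg (Finset.le_sup' a (Finset.mem_univ i)) le_rfl, ?_⟩
      · obtain ⟨j⟩ := hJ
        exact le_trans (ha j) (Finset.le_sup' a (Finset.mem_univ j))
      · simp [hgeq, hS0]
    · obtain ⟨T, hTcard, hT⟩ := exists_topset a Γ (le_of_lt hΓ)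
      have hTne : T.Nonempty := Finset.card_pos.1 (hTcard ▸ hΓpos)
      set y := T.inf' hTne a with hy
      have hy0 : 0 ≤ y := Finset.le_inf' hTne a (fun j _ => ha j)
      refine ⟨y, fun i => if i ∈ T then a i - y else 0, hy0, ?_, ?_, ?_⟩
      · intro i; dsimp only; split
        · have := Finset.inf'_le a ‹i ∈ T›; linarith
        · exact le_refl 0
      · intro i; dsimp only; split
        · linarith
        · have : a i ≤ y := Finset.le_inf' hTne a (fun j hj => hT i ‹i ∉ T› j hj)
          linarith
      · have hsum : ∑ i, (if i ∈ T then a i - y else 0) = ∑ i ∈ T, (a i - y) := by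
          rw [Finset.sum_ite_mem, Finset.univ_inter]
        have hTsum : y * Γ + ∑ i ∈ T, (a i - y) = ∑ i ∈ T, a i := by
          rw [Finset.sum_sub_distrib, Finset.sum_const, nsmul_eq_mul, hTcard]
          ring
        have hle : ∑ i ∈ T, a i ≤ g := hg.2 ⟨T, le_of_eq hTcard, rfl⟩
        obtain ⟨S, hS, hgeq⟩ := hg.1
        have hge : g ≤ ∑ i ∈ T, a i := by
          rw [hgeq]
          have e1 : ∑ i ∈ S, a i = ∑ i ∈ S ∩ T, a i + ∑ i ∈ S \ T, a i :=
            (Finset.sum_inter_add_sum_sdiff S T a).symm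
          have e2 : ∑ i ∈ T, a i = ∑ i ∈ T ∩ S, a i + ∑ i ∈ T \ S, a i :=
            (Finset.sum_inter_add_sum_sdiff T S a).symm
          have b1 : ∑ i ∈ S \ T, a i ≤ (S \ T).card * y := by
            rw [← nsmul_eq_mul, ← Finset.sum_const]
            refine Finset.sum_le_sum (fun i hi => ?_)
            exact Finset.le_inf' hTne a
              (fun j hj => hT i (Finset.mem_sdiff.1 hi).2 j hj)
          have b2 : ((T \ S).card : ℝ) * y ≤ ∑ i ∈ T \ S, a i := by
            rw [← nsmul_eq_mul, ← Finset.sum_const]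
            refine Finset.sum_le_sum (fun i hi => ?_)
            exact Finset.inf'_le a (Finset.mem_sdiff.1 hi).1
          have c1 : (S ∩ T).card + (S \ T).card = S.card :=
            Finset.card_inter_add_card_sdiff S T
          have c2 : (T ∩ S).card + (T \ S).card = T.card :=
            Finset.card_inter_add_card_sdiff T S
          have c3 : (S ∩ T).card = (T ∩ S).card := by rw [Finset.inter_comm]
          have c4 : (S \ T).card ≤ (T \ S).card := by omega
          have c5 : ((S \ T).card : ℝ) * y ≤ ((T \ S).card : ℝ) * y :=
            mul_le_mul_of_nonneg_right (by exact_mod_cast c4) hy0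
          have c6 : ∑ i ∈ S ∩ T, a i = ∑ i ∈ T ∩ S, a i := by rw [Finset.inter_comm]
          linarith
        linarith [hsum, hTsum]



/-- Theorem 1 (equivalence of the robust and dualized optimization problems).
Here `gμ x` and `gσ x` denote the worst-case deviation terms, i.e. the maxima
`max_{|Sμ| ≤ Γμ} ∑_{i ∈ Sμ} δμ i * x i` and
`max_{|Sσ| ≤ Γσ} ∑_{(i,j) ∈ Sσ} δσ (i,j) * x i * x j`, characterized by
`IsGreatest`.  The minimum over binary `x` with `∑ x i = N` of the worst-case
objective equals the minimum of the dualized objective over `(x, p, q, y, z)`,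
and a feasible `x` attains the first minimum iff some `(x, p, q, y, z)` attains
the second. -/
theorem robust_portfolio_dualization_equiv
    {I : Type*} [Fintype I] (α : ℝ) (hα0 : 0 ≤ α) (hα1 : α ≤ 1)
    (μhat : I → ℝ) (σhat : I × I → ℝ)
    (δμ : I → ℝ) (δσ : I × I → ℝ)
    (hδμ : ∀ i, 0 ≤ δμ i) (hδσ : ∀ ij, 0 ≤ δσ ij)
    (Γμ Γσ N : ℕ) (hN : N ≤ Fintype.card I)
    (gμ gσ : (I → ℝ) → ℝ)
    (hgμ : ∀ x : I → ℝ,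
      IsGreatest {w : ℝ | ∃ S : Finset I, S.card ≤ Γμ ∧ w = ∑ i ∈ S, δμ i * x i} (gμ x))
    (hgσ : ∀ x : I → ℝ,
      IsGreatest {w : ℝ | ∃ S : Finset (I × I), S.card ≤ Γσ ∧
          w = ∑ ij ∈ S, δσ ij * x ij.1 * x ij.2} (gσ x)) :
    ∃ v : ℝ,
      IsLeast {v : ℝ | ∃ x : I → ℝ, (∀ i, x i = 0 ∨ x i = 1) ∧ (∑ i, x i) = (N : ℝ) ∧
          v = α * ((∑ ij : I × I, σhat ij * x ij.1 * x ij.2) + gσ x)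
              - (1 - α) * ((∑ i, μhat i * x i) - gμ x)} v ∧
      IsLeast {v : ℝ | ∃ (x : I → ℝ) (p : I → ℝ) (q : I × I → ℝ) (y z : ℝ),
          (∀ i, x i = 0 ∨ x i = 1) ∧ (∑ i, x i) = (N : ℝ) ∧
          0 ≤ y ∧ 0 ≤ z ∧
          (∀ i, 0 ≤ p i) ∧ (∀ i, δμ i * x i ≤ y + p i) ∧
          (∀ ij, 0 ≤ q ij) ∧ (∀ ij : I × I, δσ ij * x ij.1 * x ij.2 ≤ z + q ij) ∧
          v = α * ((∑ ij : I × I, σhat ij * x ij.1 * x ij.2) + z * (Γσ : ℝ)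
                    + ∑ ij : I × I, q ij)
              - (1 - α) * ((∑ i, μhat i * x i) - y * (Γμ : ℝ) - ∑ i, p i)} v ∧
      (∀ x : I → ℝ, (∀ i, x i = 0 ∨ x i = 1) → (∑ i, x i) = (N : ℝ) →
        ((α * ((∑ ij : I × I, σhat ij * x ij.1 * x ij.2) + gσ x)
            - (1 - α) * ((∑ i, μhat i * x i) - gμ x) = v) ↔
          (∃ (p : I → ℝ) (q : I × I → ℝ) (y z : ℝ),
            0 ≤ y ∧ 0 ≤ z ∧
            (∀ i, 0 ≤ p i) ∧ (∀ i, δμ i * x i ≤ y + p i) ∧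
            (∀ ij, 0 ≤ q ij) ∧ (∀ ij : I × I, δσ ij * x ij.1 * x ij.2 ≤ z + q ij) ∧
            α * ((∑ ij : I × I, σhat ij * x ij.1 * x ij.2) + z * (Γσ : ℝ)
                  + ∑ ij : I × I, q ij)
              - (1 - α) * ((∑ i, μhat i * x i) - y * (Γμ : ℝ) - ∑ i, p i) = v))) := by
  classical
  -- objective function
  let fobj : (I → ℝ) → ℝ := fun x =>
    α * ((∑ ij : I × I, σhat ij * x ij.1 * x ij.2) + gσ x)
      - (1 - α) * ((∑ i, μhat i * x i) - gμ x)
  have hα' : (0:ℝ) ≤ 1 - α := by linarith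
  -- weak duality at fixed x
  have hweak : ∀ x : I → ℝ,
      ∀ (p : I → ℝ) (q : I × I → ℝ) (y z : ℝ), 0 ≤ y → 0 ≤ z →
      (∀ i, 0 ≤ p i) → (∀ i, δμ i * x i ≤ y + p i) →
      (∀ ij, 0 ≤ q ij) → (∀ ij : I × I, δσ ij * x ij.1 * x ij.2 ≤ z + q ij) →
      fobj x ≤ α * ((∑ ij : I × I, σhat ij * x ij.1 * x ij.2) + z * (Γσ : ℝ)
                    + ∑ ij : I × I, q ij)
              - (1 - α) * ((∑ i, μhat i * x i) - y * (Γμ : ℝ) - ∑ i, p i) := by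
    intro x p q y z hy hz hp hpc hq hqc
    have h1 : gμ x ≤ y * Γμ + ∑ i, p i := dual_weak _ _ _ (hgμ x).1 y p hy hp hpc
    have h2 : gσ x ≤ z * Γσ + ∑ ij, q ij := dual_weak _ _ _ (hgσ x).1 z q hz hq hqc
    have h3 : α * gσ x ≤ α * (z * Γσ + ∑ ij, q ij) := mul_le_mul_of_nonneg_left h2 hα0
    have h4 : (1 - α) * gμ x ≤ (1 - α) * (y * Γμ + ∑ i, p i) :=
      mul_le_mul_of_nonneg_left h1 hα'
    show α * _ - (1 - α) * _ ≤ _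
    nlinarith [h3, h4]
  -- attainment at fixed binary x
  have hattain : ∀ x : I → ℝ, (∀ i, x i = 0 ∨ x i = 1) →
      ∃ (p : I → ℝ) (q : I × I → ℝ) (y z : ℝ),
        0 ≤ y ∧ 0 ≤ z ∧
        (∀ i, 0 ≤ p i) ∧ (∀ i, δμ i * x i ≤ y + p i) ∧
        (∀ ij, 0 ≤ q ij) ∧ (∀ ij : I × I, δσ ij * x ij.1 * x ij.2 ≤ z + q ij) ∧
        α * ((∑ ij : I × I, σhat ij * x ij.1 * x ij.2) + z * (Γσ : ℝ)
              + ∑ ij : I × I, q ij)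
          - (1 - α) * ((∑ i, μhat i * x i) - y * (Γμ : ℝ) - ∑ i, p i) = fobj x := by
    intro x hx
    have hx0 : ∀ i, 0 ≤ x i := by
      intro i; rcases hx i with h | h <;> rw [h] <;> norm_num
    obtain ⟨y, p, hy, hp, hpc, hpeq⟩ :=
      dual_exact (fun i => δμ i * x i) (fun i => mul_nonneg (hδμ i) (hx0 i)) Γμ (gμ x) (hgμ x)
    obtain ⟨z, q, hz, hq, hqc, hqeq⟩ :=
      dual_exact (fun ij : I × I => δσ ij * x ij.1 * x ij.2)
        (fun ij => mul_nonneg (mul_nonneg (hδσ ij) (hx0 _)) (hx0 _)) Γσ (gσ x) (hgσ x)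
    refine ⟨p, q, y, z, hy, hz, hp, hpc, hq, hqc, ?_⟩
    show _ = α * _ - (1 - α) * _
    rw [← hpeq, ← hqeq]
    ring
  -- indicator representation of feasible x
  let ind : Finset I → (I → ℝ) := fun S i => if i ∈ S then 1 else 0
  have hind_bin : ∀ S : Finset I, ∀ i, ind S i = 0 ∨ ind S i = 1 := by
    intro S i; by_cases h : i ∈ S <;> simp [ind, h]
  have hind_sum : ∀ S : Finset I, (∑ i, ind S i) = (S.card : ℝ) := by
    intro S
    simp only [ind, Finset.sum_ite_mem, Finset.univ_inter, Finset.sum_const,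
      nsmul_eq_mul, mul_one]
  let 𝒮 : Finset (Finset I) := Finset.univ.filter fun S => S.card = N
  have h𝒮mem : ∀ S : Finset I, S ∈ 𝒮 ↔ S.card = N := by
    intro S; simp [𝒮]
  have h𝒮ne : 𝒮.Nonempty := by
    obtain ⟨T, _, hTcard⟩ := Finset.exists_subset_card_eq (s := (Finset.univ : Finset I)) (n := N)
      (by simpa using hN)
    exact ⟨T, (h𝒮mem T).2 hTcard⟩
  have hrepr : ∀ x : I → ℝ, (∀ i, x i = 0 ∨ x i = 1) → (∑ i, x i) = (N : ℝ) →
      ∃ S ∈ 𝒮, x = ind S := by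
    intro x hx hsum
    set S := Finset.univ.filter (fun i => x i = 1) with hS
    have hxeq : x = ind S := by
      funext i
      rcases hx i with h | h
      · have : i ∉ S := by simp [hS, h]
        simp [ind, this, h]
      · have : i ∈ S := by simp [hS, h]
        simp [ind, this, h]
    have hcard : S.card = N := by
      have : (S.card : ℝ) = (N : ℝ) := by rw [← hind_sum S, ← hxeq, hsum]
      exact_mod_cast this
    exact ⟨S, (h𝒮mem S).2 hcard, hxeq⟩
  obtain ⟨S0, hS0mem, hS0min⟩ := Finset.exists_min_image 𝒮 (fun S => fobj (ind S)) h𝒮ne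
  have hS0sum : (∑ i, ind S0 i) = (N : ℝ) := by
    rw [hind_sum, (h𝒮mem S0).1 hS0mem]
  -- v lower-bounds fobj on feasible x
  have hvle : ∀ x : I → ℝ, (∀ i, x i = 0 ∨ x i = 1) → (∑ i, x i) = (N : ℝ) →
      fobj (ind S0) ≤ fobj x := by
    intro x hx hsum
    obtain ⟨S, hSmem, rfl⟩ := hrepr x hx hsum
    exact hS0min S hSmem
  refine ⟨fobj (ind S0), ⟨⟨ind S0, hind_bin S0, hS0sum, rfl⟩, ?_⟩, ⟨?_, ?_⟩, ?_⟩
  · rintro w ⟨x, hx, hsum, rfl⟩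
    exact hvle x hx hsum
  · obtain ⟨p, q, y, z, hy, hz, hp, hpc, hq, hqc, heq⟩ := hattain (ind S0) (hind_bin S0)
    exact ⟨ind S0, p, q, y, z, hind_bin S0, hS0sum, hy, hz, hp, hpc, hq, hqc, heq.symm⟩
  · rintro w ⟨x, p, q, y, z, hx, hsum, hy, hz, hp, hpc, hq, hqc, rfl⟩
    exact le_trans (hvle x hx hsum) (hweak x p q y z hy hz hp hpc hq hqc)
  · intro x hx hsum
    constructor
    · intro hfx
      obtain ⟨p, q, y, z, hy, hz, hp, hpc, hq, hqc, heq⟩ := hattain x hx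
      exact ⟨p, q, y, z, hy, hz, hp, hpc, hq, hqc, heq.trans hfx⟩
    · rintro ⟨p, q, y, z, hy, hz, hp, hpc, hq, hqc, heq⟩
      have h1 : fobj x ≤ fobj (ind S0) := heq ▸ hweak x p q y z hy hz hp hpc hq hqc
      exact le_antisymm h1 (hvle x hx hsum)
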